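/- For every finite nonempty advertiser set I (with values v_i > 0 and budgets B_i > 0) and every supply S > 0, a market-clearing price exists: there exist p > 0 and coefficients α_i ∈ [0,1] (i ∈ I) with α_i = 1 whenever v_i > p and α_i = 0 whenever v_i < p, such that S = Σ_{i∈I} α_i B_i / p. -/

import Mathlib

/-- `p` is a market-clearing (optimal) price for advertiser set `I` with values `v`,
budgets `B` and supply `S`: there are coefficients `α i ∈ [0,1]`, equal to `1` when
`v i > p` and to `0` when `v i < p`, such that `S = ∑ i ∈ I, α i * B i / p`. -/
def IsClearingPrice {ι : Type*} (I : Finset ι) (v B : ι → ℝ) (S p : ℝ) : Prop :=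
  0 < p ∧ ∃ α : ι → ℝ, (∀ i ∈ I, 0 ≤ α i ∧ α i ≤ 1) ∧
    (∀ i ∈ I, p < v i → α i = 1) ∧ (∀ i ∈ I, v i < p → α i = 0) ∧
    S = ∑ i ∈ I, α i * B i / p

/-- Ex post monopoly: for every finite nonempty advertiser set with positive values and
budgets, and every supply `S > 0`, a market-clearing price exists. -/
theorem stmt_2 {ι : Type*} (I : Finset ι) (hI : I.Nonempty) (v B : ι → ℝ)
    (hv : ∀ i ∈ I, 0 < v i) (hB : ∀ i ∈ I, 0 < B i) (S : ℝ) (hS : 0 < S) :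
    ∃ p : ℝ, IsClearingPrice I v B S p := by
  classical
  set T : ℝ := ∑ i ∈ I, B i with hT
  have hT0 : 0 < T := Finset.sum_pos hB hI
  set G : ℝ → ℝ := fun w => ∑ i ∈ I.filter (fun i => w ≤ v i), B i with hGdef
  by_cases hcase : ∃ w ∈ I.image v, S * w ≤ G w
  · set W' := (I.image v).filter (fun w => S * w ≤ G w) with hW'
    have hW'ne : W'.Nonempty := by
      obtain ⟨w, hw, hle⟩ := hcase
      exact ⟨w, Finset.mem_filter.2 ⟨hw, hle⟩⟩
    set w! := W'.max' hW'ne with hw!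
    have hw!mem := W'.max'_mem hW'ne
    have hw!img : w! ∈ I.image v := (Finset.mem_filter.1 hw!mem).1
    have hw!le : S * w! ≤ G w! := (Finset.mem_filter.1 hw!mem).2
    obtain ⟨i0, hi0I, hi0v⟩ := Finset.mem_image.1 hw!img
    have hw!pos : 0 < w! := hi0v ▸ hv i0 hi0I
    set A : ℝ := ∑ i ∈ I.filter (fun i => w! < v i), B i with hA
    by_cases hAS : A ≤ S * w!
    · -- clearing price is w!, with fractional coefficient on the boundary
      set E : ℝ := ∑ i ∈ I.filter (fun i => v i = w!), B i with hE
      have hi0mem : i0 ∈ I.filter (fun i => v i = w!) := Finset.mem_filter.2 ⟨hi0I, hi0v⟩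
      have hE0 : 0 < E := by
        refine Finset.sum_pos (fun i hi => hB i (Finset.mem_filter.1 hi).1) ⟨i0, hi0mem⟩
      have hsplit : G w! = A + E := by
        have hfil : I.filter (fun i => w! ≤ v i)
            = (I.filter (fun i => w! < v i)) ∪ (I.filter (fun i => v i = w!)) := by
          ext i
          simp only [Finset.mem_filter, Finset.mem_union]
          constructor
          · rintro ⟨hiI, hle⟩
            rcases lt_or_eq_of_le hle with h | h
            · exact Or.inl ⟨hiI, h⟩
            · exact Or.inr ⟨hiI, h.symm⟩
          · rintro (⟨hiI, h⟩ | ⟨hiI, h⟩)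
            · exact ⟨hiI, le_of_lt h⟩
            · exact ⟨hiI, le_of_eq h.symm⟩
        have hdisj : Disjoint (I.filter (fun i => w! < v i)) (I.filter (fun i => v i = w!)) := by
          rw [Finset.disjoint_left]
          intro i h1 h2
          have := (Finset.mem_filter.1 h1).2
          have := (Finset.mem_filter.1 h2).2
          simp_all
        simp only [hGdef]
        rw [hfil, Finset.sum_union hdisj]
      set c : ℝ := (S * w! - A) / E with hc
      have hc0 : 0 ≤ c := div_nonneg (by linarith) hE0.le
      have hc1 : c ≤ 1 := by
        rw [div_le_one hE0]
        linarith [hsplit ▸ hw!le]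
      refine ⟨w!, hw!pos, fun i => if w! < v i then 1 else if v i = w! then c else 0,
        ?_, ?_, ?_, ?_⟩
      · intro i _
        by_cases h1 : w! < v i
        · simp [h1]
        · by_cases h2 : v i = w! <;> simp [h1, h2, hc0, hc1]
      · intro i _ h; simp [h]
      · intro i _ h
        have h1 : ¬ w! < v i := by linarith
        have h2 : v i ≠ w! := by linarith
        simp [h1, h2]
      · have hsum : ∑ i ∈ I, (if w! < v i then (1:ℝ) else if v i = w! then c else 0) * B i
            = A + c * E := by
          have key : ∀ i ∈ I, (if w! < v i then (1:ℝ) else if v i = w! then c else 0) * B i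
              = (if w! < v i then B i else 0) + (if v i = w! then c * B i else 0) := by
            intro i _
            by_cases h1 : w! < v i
            · have h2 : v i ≠ w! := by intro h; rw [h] at h1; exact lt_irrefl _ h1
              simp [h1, h2]
            · by_cases h2 : v i = w! <;> simp [h1, h2]
          rw [Finset.sum_congr rfl key, Finset.sum_add_distrib,
            ← Finset.sum_filter, ← Finset.sum_filter, ← hA, ← Finset.mul_sum, ← hE]
        rw [← Finset.sum_div, hsum, hc, div_mul_cancel₀ _ (ne_of_gt hE0)]
        field_simp
        ring
    · -- clearing price is A / S, strictly between w! and the next value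
      push_neg at hAS
      have hA0 : 0 < A := lt_trans (by positivity) hAS
      set p := A / S with hp
      have hp0 : 0 < p := div_pos hA0 hS
      have hpw : w! < p := by rw [hp, lt_div_iff₀ hS]; linarith
      -- the set of advertisers with value above w! is nonempty
      have hFne : (I.filter (fun i => w! < v i)).Nonempty := by
        by_contra h
        rw [Finset.not_nonempty_iff_eq_empty] at h
        rw [hA, h, Finset.sum_empty] at hA0
        exact lt_irrefl _ hA0
      set Fv := (I.filter (fun i => w! < v i)).image v with hFv
      have hFvne : Fv.Nonempty := hFne.image v
      set w' := Fv.min' hFvne with hw'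
      have hw'mem : w' ∈ Fv := Fv.min'_mem hFvne
      obtain ⟨j, hjF, hjv⟩ := Finset.mem_image.1 hw'mem
      have hjI : j ∈ I := (Finset.mem_filter.1 hjF).1
      have hw'gt : w! < w' := hjv ▸ (Finset.mem_filter.1 hjF).2
      have hw'img : w' ∈ I.image v := Finset.mem_image.2 ⟨j, hjI, hjv⟩
      -- every advertiser with value above w! has value at least w'
      have hmin : ∀ i ∈ I, w! < v i → w' ≤ v i := by
        intro i hiI hlt
        exact Fv.min'_le _ (Finset.mem_image.2 ⟨i, Finset.mem_filter.2 ⟨hiI, hlt⟩, rfl⟩)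
      have hGw' : G w' = A := by
        simp only [hGdef, hA]
        apply Finset.sum_congr _ (fun _ _ => rfl)
        ext i
        simp only [Finset.mem_filter]
        exact ⟨fun ⟨hiI, h⟩ => ⟨hiI, lt_of_lt_of_le hw'gt h⟩,
          fun ⟨hiI, h⟩ => ⟨hiI, hmin i hiI h⟩⟩
      -- by maximality of w!, demand at w' is short: A < S * w'
      have hw'short : A < S * w' := by
        by_contra h
        push_neg at h
        have : w' ∈ W' := Finset.mem_filter.2 ⟨hw'img, by rw [hGw']; exact h⟩
        have := W'.le_max' w' this
        rw [← hw!] at this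
        linarith
      have hpw' : p < w' := by rw [hp, div_lt_iff₀ hS]; linarith [mul_comm S w']
      refine ⟨p, hp0, fun i => if w! < v i then 1 else 0, ?_, ?_, ?_, ?_⟩
      · intro i _; by_cases h : w! < v i <;> simp [h]
      · intro i hiI h
        have : w! < v i := lt_trans hpw h
        simp [this]
      · intro i hiI h
        have : ¬ w! < v i := by
          intro hlt
          have := hmin i hiI hlt
          linarith
        simp [this]
      · simp only []; rw [← Finset.sum_div]
        have : ∑ i ∈ I, (if w! < v i then (1:ℝ) else 0) * B i = A := by
          rw [hA, Finset.sum_filter]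
          exact Finset.sum_congr rfl (fun i _ => by by_cases h : w! < v i <;> simp [h])
        rw [this, hp]
        field_simp
  · -- no value clears: price below all values, everyone fully served
    push_neg at hcase
    set m := (I.image v).min' (hI.image v) with hm
    have hmmem : m ∈ I.image v := Finset.min'_mem _ _
    obtain ⟨i0, hi0I, hi0v⟩ := Finset.mem_image.1 hmmem
    have hmle : ∀ i ∈ I, m ≤ v i := fun i hi =>
      Finset.min'_le _ _ (Finset.mem_image.2 ⟨i, hi, rfl⟩)
    have hGm : G m = T := by
      simp only [hGdef, hT]
      apply Finset.sum_congr _ (fun _ _ => rfl)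
      rw [Finset.filter_true_of_mem hmle]
    have hlt : T < S * m := by
      have := hcase m hmmem
      rw [hGm] at this
      linarith
    set p := T / S with hp
    have hp0 : 0 < p := div_pos hT0 hS
    have hplt : ∀ i ∈ I, p < v i := by
      intro i hiI
      have h1 : p < m := by rw [hp, div_lt_iff₀ hS]; linarith [mul_comm S m]
      exact lt_of_lt_of_le h1 (hmle i hiI)
    refine ⟨p, hp0, fun _ => 1, fun i _ => ⟨zero_le_one, le_refl 1⟩, fun _ _ _ => rfl,
      fun i hiI h => absurd h (not_lt.2 (hplt i hiI).le), ?_⟩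
    simp only []; rw [← Finset.sum_div]
    simp only [one_mul]
    rw [← hT, hp]
    field_simp
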